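/- The strategy iteration algorithm for priced games terminates: the process that repeatedly applies improving sets for Player 1 (followed in an inner loop by repeatedly applying improving sets for Player 2 until Player 2 has none) cannot revisit any strategy profile, and hence terminates in an optimal strategy profile with respect to which neither player has an improving switch. -/

import Mathlib

noncomputable section

open Classical
open scoped ENNReal

namespace PTGpaper

/-- A priced game: finitely many states partitioned between Player 1 (owner `0`,
the minimizer) and Player 2 (owner `1`, the maximizer), actions with nonnegative
(extended real) costs and destinations in the states or the terminal state
(modeled by `none`). -/
structure PricedGame where
  n : ℕ
  owner : Fin n → Fin 2
  A : Fin n → Finset ℕ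
  cost : ℕ → ℝ≥0∞
  dest : ℕ → Option (Fin n)

namespace PricedGame

variable (G : PricedGame)

/-- A positional strategy profile: a choice of an available action in each state. -/
def Valid (σ : Fin G.n → ℕ) : Prop :=
  ∀ k, σ k ∈ G.A k

def step (σ : Fin G.n → ℕ) (o : Option (Fin G.n)) : Option (Fin G.n) :=
  o.bind fun k => G.dest (σ k)

/-- The state reached after `t` steps of the path `P_{k,σ}` (`none` = terminal). -/
def reach (σ : Fin G.n → ℕ) (k : Fin G.n) (t : ℕ) : Option (Fin G.n) :=
  (G.step σ)^[t] (some k)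

/-- The path from `k` under `σ` reaches the terminal state `⊥`. -/
def Terminates (σ : Fin G.n → ℕ) (k : Fin G.n) : Prop :=
  ∃ t, G.reach σ k t = none

/-- Payoff `u(k,σ)`: total cost of the path from `k` to `⊥`, or `∞` if `⊥` is unreached. -/
def payoff (σ : Fin G.n → ℕ) (k : Fin G.n) : ℝ≥0∞ :=
  if G.Terminates σ k then
    ∑' t : ℕ, (G.reach σ k t).elim 0 (fun k' => G.cost (σ k'))
  else ⊤

/-- Length `ℓ(k,σ)` of the path from `k` to `⊥` (`⊤` if `⊥` is unreached). -/
def len (σ : Fin G.n → ℕ) (k : Fin G.n) : ℕ∞ :=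
  ⨅ (t : ℕ) (_ : G.reach σ k t = none), (t : ℕ∞)

def payoffO (σ : Fin G.n → ℕ) (o : Option (Fin G.n)) : ℝ≥0∞ :=
  o.elim 0 (G.payoff σ)

def lenO (σ : Fin G.n → ℕ) (o : Option (Fin G.n)) : ℕ∞ :=
  o.elim 0 (G.len σ)

/-- The valuation `ν(k,σ) = (u(k,σ), ℓ(k,σ))`, ordered lexicographically. -/
def valn (σ : Fin G.n → ℕ) (k : Fin G.n) : ℝ≥0∞ ×ₗ ℕ∞ :=
  toLex (G.payoff σ k, G.len σ k)

/-- The valuation obtained by first using action `j` and then following `σ`. -/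
def cand (σ : Fin G.n → ℕ) (j : ℕ) : ℝ≥0∞ ×ₗ ℕ∞ :=
  toLex (G.cost j + G.payoffO σ (G.dest j), 1 + G.lenO σ (G.dest j))

/-- `j ∈ A k` is an improving switch for Player 1 (the minimizer) at `k` w.r.t. `σ`. -/
def Improving1 (σ : Fin G.n → ℕ) (k : Fin G.n) (j : ℕ) : Prop :=
  j ∈ G.A k ∧ G.cand σ j < G.valn σ k

/-- `j ∈ A k` is an improving switch for Player 2 (the maximizer) at `k` w.r.t. `σ`. -/
def Improving2 (σ : Fin G.n → ℕ) (k : Fin G.n) (j : ℕ) : Prop :=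
  j ∈ G.A k ∧ G.valn σ k < G.cand σ j

/-- Strongly improving switch for Player 1: strictly smaller payoff. -/
def StronglyImproving1 (σ : Fin G.n → ℕ) (k : Fin G.n) (j : ℕ) : Prop :=
  j ∈ G.A k ∧ G.cost j + G.payoffO σ (G.dest j) < G.payoff σ k

/-- Strongly improving switch for Player 2: strictly larger payoff. -/
def StronglyImproving2 (σ : Fin G.n → ℕ) (k : Fin G.n) (j : ℕ) : Prop :=
  j ∈ G.A k ∧ G.payoff σ k < G.cost j + G.payoffO σ (G.dest j)

/-- Combine a Player 1 strategy and a Player 2 strategy into a profile. -/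
def combine (σ₁ σ₂ : Fin G.n → ℕ) (k : Fin G.n) : ℕ :=
  if G.owner k = 0 then σ₁ k else σ₂ k

/-- The upper value `min_{σ₁} max_{σ₂} u(k,σ₁,σ₂)`. -/
def upperVal (k : Fin G.n) : ℝ≥0∞ :=
  ⨅ σ₁ : {σ : Fin G.n → ℕ // G.Valid σ}, ⨆ σ₂ : {σ : Fin G.n → ℕ // G.Valid σ},
    G.payoff (G.combine σ₁ σ₂) k

/-- The lower value `max_{σ₂} min_{σ₁} u(k,σ₁,σ₂)`. -/
def lowerVal (k : Fin G.n) : ℝ≥0∞ :=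
  ⨆ σ₂ : {σ : Fin G.n → ℕ // G.Valid σ}, ⨅ σ₁ : {σ : Fin G.n → ℕ // G.Valid σ},
    G.payoff (G.combine σ₁ σ₂) k

/-- `σ₁` is a best response of Player 1 to `σ₂`: it minimizes the payoff at every state. -/
def BestResponse1 (σ₁ σ₂ : Fin G.n → ℕ) : Prop :=
  G.Valid σ₁ ∧ ∀ σ₁' : Fin G.n → ℕ, G.Valid σ₁' →
    ∀ k, G.payoff (G.combine σ₁ σ₂) k ≤ G.payoff (G.combine σ₁' σ₂) k

/-- `σ₂` is a best response of Player 2 to `σ₁`: it maximizes the payoff at every state. -/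
def BestResponse2 (σ₁ σ₂ : Fin G.n → ℕ) : Prop :=
  G.Valid σ₂ ∧ ∀ σ₂' : Fin G.n → ℕ, G.Valid σ₂' →
    ∀ k, G.payoff (G.combine σ₁ σ₂') k ≤ G.payoff (G.combine σ₁ σ₂) k

/-- `σ₁` is an optimal Player 1 strategy: it attains the upper value at every state. -/
def Optimal1 (σ₁ : Fin G.n → ℕ) : Prop :=
  G.Valid σ₁ ∧ ∀ k,
    (⨆ σ₂ : {σ : Fin G.n → ℕ // G.Valid σ}, G.payoff (G.combine σ₁ σ₂) k) = G.upperVal k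

/-- `σ₂` is an optimal Player 2 strategy: it attains the lower value at every state. -/
def Optimal2 (σ₂ : Fin G.n → ℕ) : Prop :=
  G.Valid σ₂ ∧ ∀ k,
    (⨅ σ₁ : {σ : Fin G.n → ℕ // G.Valid σ}, G.payoff (G.combine σ₁ σ₂) k) = G.lowerVal k

/-- `σ[B]`: switch `σ` to the actions prescribed by the partial assignment `β`
(at most one action per state). -/
def switch (σ : Fin G.n → ℕ) (β : Fin G.n → Option ℕ) (k : Fin G.n) : ℕ :=
  (β k).getD (σ k)

/-- `β` represents an improving set `B` for Player 1: it contains at least one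
improving switch for Player 1 and no improving switch for Player 2. -/
def ImprovingSet1 (σ : Fin G.n → ℕ) (β : Fin G.n → Option ℕ) : Prop :=
  (∀ k j, β k = some j → j ∈ G.A k) ∧
  (∃ k j, β k = some j ∧ G.Improving1 σ k j) ∧
  (∀ k j, β k = some j → ¬ G.Improving2 σ k j)

/-- `β` represents an improving set `B` for Player 2. -/
def ImprovingSet2 (σ : Fin G.n → ℕ) (β : Fin G.n → Option ℕ) : Prop :=
  (∀ k j, β k = some j → j ∈ G.A k) ∧
  (∃ k j, β k = some j ∧ G.Improving2 σ k j) ∧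
  (∀ k j, β k = some j → ¬ G.Improving1 σ k j)

end PricedGame

end PTGpaper

namespace PTGpaper

namespace PricedGame

variable (G : PricedGame)

/-- One step of the strategy iteration algorithm: either an inner-loop step, applying
an improving set for Player 2 (within Player-2 states), or an outer-loop step, applying
an improving set for Player 1 (within Player-1 states), which is only performed when
Player 2 has no improving switches. -/
def AlgStep (σ σ' : Fin G.n → ℕ) : Prop :=
  (∃ β, (∀ k, β k ≠ none → G.owner k = 1) ∧ G.ImprovingSet2 σ β ∧ σ' = G.switch σ β) ∨
  ((∀ k j, G.owner k = 1 → ¬ G.Improving2 σ k j) ∧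
    ∃ β, (∀ k, β k ≠ none → G.owner k = 0) ∧ G.ImprovingSet1 σ β ∧ σ' = G.switch σ β)

end PricedGame

open PricedGame

namespace PricedGame

variable {G : PricedGame}

-- lex helpers
lemma lex_fst_le {a c : ℝ≥0∞} {b d : ℕ∞} (h : toLex (a,b) ≤ toLex (c,d)) : a ≤ c := by
  rcases Prod.Lex.le_iff.mp h with h'|⟨h',_⟩
  exacts [h'.le, h'.le]

lemma lex_snd_le {a c : ℝ≥0∞} {b d : ℕ∞} (h : toLex (a,b) ≤ toLex (c,d)) (he : a = c) : b ≤ d := by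
  rcases Prod.Lex.le_iff.mp h with h'|⟨_,h'⟩
  · exact absurd h' (by simp [he])
  · exact h'

lemma lex_lt_cases {a c : ℝ≥0∞} {b d : ℕ∞} (h : toLex (a,b) < toLex (c,d)) :
    a < c ∨ (a = c ∧ b < d) := Prod.Lex.lt_iff.mp h

lemma lex_lt_of_fst {a c : ℝ≥0∞} {b d : ℕ∞} (h : a < c) : toLex (a,b) < toLex (c,d) :=
  Prod.Lex.lt_iff.mpr (Or.inl h)

lemma lex_lt_of_snd {a c : ℝ≥0∞} {b d : ℕ∞} (h : a = c) (h2 : b < d) : toLex (a,b) < toLex (c,d) :=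
  Prod.Lex.lt_iff.mpr (Or.inr ⟨h,h2⟩)

lemma enat_lt_of_one_add_le {x y : ℕ∞} (h : 1 + x ≤ y) (hy : y ≠ ⊤) : x < y := by
  have hx : x ≠ ⊤ := by rintro rfl; exact hy (top_le_iff.mp (by simpa using h))
  lift x to ℕ using hx; lift y to ℕ using hy
  have h2 : (x + 1 : ℕ∞) ≤ y := by rwa [add_comm] at h
  exact_mod_cast Nat.lt_of_succ_le (by exact_mod_cast h2)

lemma owner_one {x : Fin 2} (h : ¬ x = 0) : x = 1 := by
  fin_cases x
  · exact absurd rfl h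
  · rfl

-- path basics
lemma reach_zero (σ : Fin G.n → ℕ) (k : Fin G.n) : G.reach σ k 0 = some k := rfl

lemma reach_none (σ : Fin G.n → ℕ) (t : ℕ) : (G.step σ)^[t] none = none :=
  Function.iterate_fixed rfl t

lemma reach_succ (σ : Fin G.n → ℕ) (k : Fin G.n) (t : ℕ) :
    G.reach σ k (t+1) = (G.step σ)^[t] (G.dest (σ k)) := by
  rw [reach, Function.iterate_succ_apply]; rfl

lemma reach_succ_none (σ : Fin G.n → ℕ) (k : Fin G.n) (t : ℕ) (h : G.dest (σ k) = none) :
    G.reach σ k (t+1) = none := by rw [reach_succ, h, reach_none]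

lemma reach_succ_some (σ : Fin G.n → ℕ) (k : Fin G.n) (t : ℕ) (d : Fin G.n)
    (h : G.dest (σ k) = some d) : G.reach σ k (t+1) = G.reach σ d t := by
  rw [reach_succ, h]; rfl

lemma reach_succ' (σ : Fin G.n → ℕ) (k : Fin G.n) (t : ℕ) :
    G.reach σ k (t+1) = (G.reach σ k t).bind (fun k' => G.dest (σ k')) := by
  rw [reach, Function.iterate_succ_apply']; rfl

lemma terminates_of_dest_none (σ : Fin G.n → ℕ) (k : Fin G.n) (h : G.dest (σ k) = none) :
    G.Terminates σ k := ⟨1, reach_succ_none σ k 0 h⟩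

lemma terminates_succ_iff (σ : Fin G.n → ℕ) (k d : Fin G.n) (h : G.dest (σ k) = some d) :
    G.Terminates σ k ↔ G.Terminates σ d := by
  constructor
  · rintro ⟨t, ht⟩
    cases t with
    | zero => exact absurd ht (by simp [reach_zero])
    | succ u => exact ⟨u, by rwa [reach_succ_some σ k u d h] at ht⟩
  · rintro ⟨t, ht⟩; exact ⟨t+1, by rwa [reach_succ_some σ k t d h]⟩

lemma payoffO_none (σ : Fin G.n → ℕ) : G.payoffO σ none = 0 := rfl
lemma payoffO_some (σ : Fin G.n → ℕ) (d : Fin G.n) : G.payoffO σ (some d) = G.payoff σ d := rfl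
lemma lenO_none (σ : Fin G.n → ℕ) : G.lenO σ none = 0 := rfl
lemma lenO_some (σ : Fin G.n → ℕ) (d : Fin G.n) : G.lenO σ (some d) = G.len σ d := rfl

lemma payoff_eq_top (σ : Fin G.n → ℕ) (k : Fin G.n) (h : ¬ G.Terminates σ k) :
    G.payoff σ k = ⊤ := by rw [payoff, if_neg h]

lemma payoff_unfold (σ : Fin G.n → ℕ) (k : Fin G.n) :
    G.payoff σ k = G.cost (σ k) + G.payoffO σ (G.dest (σ k)) := by
  cases hd : G.dest (σ k) with
  | none =>
    have hterm := terminates_of_dest_none σ k hd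
    rw [payoff, if_pos hterm, payoffO_none, add_zero]
    rw [tsum_eq_single 0 ?_]
    · rfl
    · intro b hb
      obtain ⟨u, rfl⟩ := Nat.exists_eq_succ_of_ne_zero hb
      rw [reach_succ_none σ k u hd]; rfl
  | some d =>
    by_cases ht : G.Terminates σ d
    · rw [payoff, if_pos ((terminates_succ_iff σ k d hd).mpr ht), payoffO_some,
        payoff, if_pos ht]
      rw [tsum_eq_zero_add' ENNReal.summable]
      congr 1
      apply tsum_congr; intro t; rw [reach_succ_some σ k t d hd]
    · rw [payoff_eq_top σ k (fun hh => ht ((terminates_succ_iff σ k d hd).mp hh)),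
        payoffO_some, payoff_eq_top σ d ht, add_top]

lemma len_of_terminates (σ : Fin G.n → ℕ) (k : Fin G.n) (h : G.Terminates σ k) :
    G.len σ k = (Nat.find h : ℕ∞) := by
  apply le_antisymm
  · exact iInf₂_le (Nat.find h) (Nat.find_spec h)
  · exact le_iInf₂ fun t ht => by exact_mod_cast Nat.find_min' h ht

lemma len_of_not_terminates (σ : Fin G.n → ℕ) (k : Fin G.n) (h : ¬ G.Terminates σ k) :
    G.len σ k = ⊤ := by
  rw [len, iInf_eq_top]; intro t; rw [iInf_eq_top]; intro ht; exact absurd ⟨t, ht⟩ h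

lemma len_ne_top (σ : Fin G.n → ℕ) (k : Fin G.n) (h : G.Terminates σ k) : G.len σ k ≠ ⊤ := by
  rw [len_of_terminates σ k h]; simp

lemma len_unfold (σ : Fin G.n → ℕ) (k : Fin G.n) :
    G.len σ k = 1 + G.lenO σ (G.dest (σ k)) := by
  cases hd : G.dest (σ k) with
  | none =>
    have h := terminates_of_dest_none σ k hd
    rw [len_of_terminates σ k h, lenO_none, add_zero]
    have h1 : Nat.find h = 1 := by
      apply le_antisymm
      · exact Nat.find_le (reach_succ_none σ k 0 hd)
      · rcases Nat.eq_zero_or_pos (Nat.find h) with h0|h0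
        · exact absurd (h0 ▸ Nat.find_spec h) (by simp [reach_zero])
        · exact h0
    rw [h1]; rfl
  | some d =>
    by_cases ht : G.Terminates σ d
    · have htk := (terminates_succ_iff σ k d hd).mpr ht
      rw [len_of_terminates σ k htk, lenO_some, len_of_terminates σ d ht]
      have heq : Nat.find htk = Nat.find ht + 1 := by
        apply le_antisymm
        · exact Nat.find_le (by rw [reach_succ_some σ k _ d hd]; exact Nat.find_spec ht)
        · cases hfk : Nat.find htk with
          | zero => exact absurd (hfk ▸ Nat.find_spec htk) (by simp [reach_zero])
          | succ m =>
            have hm : G.reach σ d m = none := by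
              have h2 := Nat.find_spec htk
              rw [hfk, reach_succ_some σ k m d hd] at h2; exact h2
            exact Nat.succ_le_succ (Nat.find_min' ht hm)
      rw [heq]; push_cast; ring
    · rw [len_of_not_terminates σ k (fun hh => ht ((terminates_succ_iff σ k d hd).mp hh)),
        lenO_some, len_of_not_terminates σ d ht]
      simp

lemma valn_unfold (σ : Fin G.n → ℕ) (k : Fin G.n) : G.valn σ k = G.cand σ (σ k) := by
  rw [valn, cand, payoff_unfold σ k, len_unfold σ k]

lemma cand_def (σ : Fin G.n → ℕ) (j : ℕ) :
    G.cand σ j = toLex (G.cost j + G.payoffO σ (G.dest j), 1 + G.lenO σ (G.dest j)) := rfl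

lemma valn_def (σ : Fin G.n → ℕ) (k : Fin G.n) :
    G.valn σ k = toLex (G.payoff σ k, G.len σ k) := rfl

lemma exists_path (ρ : Fin G.n → ℕ) (k : Fin G.n) (ht : ¬ G.Terminates ρ k) :
    ∃ g : ℕ → Fin G.n, g 0 = k ∧ (∀ t, G.dest (ρ (g t)) = some (g (t+1))) ∧
      ¬ Function.Injective g := by
  have hall : ∀ t, (G.reach ρ k t).isSome := by
    intro t
    rcases ho : G.reach ρ k t with _ | x
    · exact absurd ⟨t, ho⟩ ht
    · rfl
  have hbind : ∀ (o : Option (Fin G.n)) (ho : o.isSome) (ffun : Fin G.n → Option (Fin G.n)),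
      o.bind ffun = ffun (o.get ho) := by
    intro o ho ffun
    cases o
    · simp at ho
    · rfl
  refine ⟨fun t => (G.reach ρ k t).get (hall t), ?_, ?_, ?_⟩
  · show (G.reach ρ k 0).get (hall 0) = k
    exact Option.some_inj.mp ((Option.some_get (hall 0)).trans (reach_zero ρ k))
  · intro t
    calc G.dest (ρ ((G.reach ρ k t).get (hall t)))
        = (G.reach ρ k t).bind (fun k' => G.dest (ρ k')) := (hbind _ (hall t) (fun k' => G.dest (ρ k'))).symm
      _ = G.reach ρ k (t+1) := (reach_succ' ρ k t).symm
      _ = some ((G.reach ρ k (t+1)).get (hall (t+1))) := (Option.some_get (hall (t+1))).symm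
  · intro hinj
    obtain ⟨x, y, hxy, hgxy⟩ := Finite.exists_ne_map_eq_of_infinite
      (fun t => (G.reach ρ k t).get (hall t))
    exact hxy (hinj hgxy)

/-- descend: payoff of the new strategy `ρ` is below the old `σ`. -/
lemma payoff_le_of_stepLe (σ ρ : Fin G.n → ℕ) (h : ∀ m, G.cand σ (ρ m) ≤ G.valn σ m)
    (k : Fin G.n) : G.payoff ρ k ≤ G.payoff σ k := by
  by_cases ht : G.Terminates ρ k
  · have key : ∀ T k, G.reach ρ k T = none → G.payoff ρ k ≤ G.payoff σ k := by
      intro T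
      induction T with
      | zero => intro k hT; exact absurd hT (by simp [reach_zero])
      | succ T IH =>
        intro k hT
        have h1 : G.cost (ρ k) + G.payoffO σ (G.dest (ρ k)) ≤ G.payoff σ k := by
          have h' := h k; rw [valn_def, cand_def] at h'; exact lex_fst_le h'
        have h2 : G.payoffO ρ (G.dest (ρ k)) ≤ G.payoffO σ (G.dest (ρ k)) := by
          cases hd : G.dest (ρ k) with
          | none => exact le_refl _
          | some d => exact IH d (by rwa [reach_succ_some ρ k T d hd] at hT)
        calc G.payoff ρ k = G.cost (ρ k) + G.payoffO ρ (G.dest (ρ k)) := payoff_unfold ρ k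
          _ ≤ G.cost (ρ k) + G.payoffO σ (G.dest (ρ k)) := add_le_add_right h2 _
          _ ≤ G.payoff σ k := h1
    obtain ⟨T, hT⟩ := ht; exact key T k hT
  · rw [payoff_eq_top ρ k ht]
    by_contra hc
    have htop : G.payoff σ k ≠ ⊤ := fun he => hc (he ▸ le_refl _)
    obtain ⟨g, hg0, hstep, hninj⟩ := exists_path ρ k ht
    have hmono2 : ∀ t, G.cost (ρ (g t)) + G.payoff σ (g (t+1)) ≤ G.payoff σ (g t) := by
      intro t
      have h' := h (g t); rw [valn_def, cand_def, hstep t, payoffO_some] at h'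
      exact lex_fst_le h'
    have hmono1 : ∀ t, G.payoff σ (g (t+1)) ≤ G.payoff σ (g t) :=
      fun t => le_trans (self_le_add_left _ _) (hmono2 t)
    have hfin : ∀ t, G.payoff σ (g t) ≠ ⊤ := by
      intro t
      induction t with
      | zero => rwa [hg0]
      | succ t IH => exact fun he => IH (top_le_iff.mp (he ▸ hmono1 t))
    have hterm : ∀ t, G.Terminates σ (g t) := by
      intro t; by_contra hnt; exact hfin t (payoff_eq_top σ (g t) hnt)
    have hdec : ∀ t, G.valn σ (g (t+1)) < G.valn σ (g t) := by
      intro t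
      rcases lt_or_eq_of_le (hmono1 t) with hlt | heq
      · rw [valn_def, valn_def]; exact lex_lt_of_fst hlt
      · have hceq : G.cost (ρ (g t)) + G.payoff σ (g (t+1)) = G.payoff σ (g t) :=
          le_antisymm (hmono2 t) (heq ▸ self_le_add_left _ _)
        have h' := h (g t)
        rw [valn_def, cand_def, hstep t, payoffO_some, lenO_some] at h'
        have hsnd := lex_snd_le h' hceq
        have hlt2 : G.len σ (g (t+1)) < G.len σ (g t) :=
          enat_lt_of_one_add_le hsnd (len_ne_top σ (g t) (hterm t))
        rw [valn_def, valn_def]; exact lex_lt_of_snd heq hlt2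
    have hsa : StrictAnti (fun t => G.valn σ (g t)) := strictAnti_nat_of_succ_lt hdec
    exact hninj (Function.Injective.of_comp (f := G.valn σ) hsa.injective)

/-- ascend: payoff of the old strategy `σ` is below the new `ρ`. -/
lemma payoff_le_of_stepGe (σ ρ : Fin G.n → ℕ) (h : ∀ m, G.valn σ m ≤ G.cand σ (ρ m))
    (k : Fin G.n) : G.payoff σ k ≤ G.payoff ρ k := by
  by_cases ht : G.Terminates ρ k
  · have key : ∀ T k, G.reach ρ k T = none → G.payoff σ k ≤ G.payoff ρ k := by
      intro T
      induction T with
      | zero => intro k hT; exact absurd hT (by simp [reach_zero])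
      | succ T IH =>
        intro k hT
        have h1 : G.payoff σ k ≤ G.cost (ρ k) + G.payoffO σ (G.dest (ρ k)) := by
          have h' := h k; rw [valn_def, cand_def] at h'; exact lex_fst_le h'
        have h2 : G.payoffO σ (G.dest (ρ k)) ≤ G.payoffO ρ (G.dest (ρ k)) := by
          cases hd : G.dest (ρ k) with
          | none => exact le_refl _
          | some d => exact IH d (by rwa [reach_succ_some ρ k T d hd] at hT)
        calc G.payoff σ k ≤ G.cost (ρ k) + G.payoffO σ (G.dest (ρ k)) := h1
          _ ≤ G.cost (ρ k) + G.payoffO ρ (G.dest (ρ k)) := add_le_add_right h2 _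
          _ = G.payoff ρ k := (payoff_unfold ρ k).symm
    obtain ⟨T, hT⟩ := ht; exact key T k hT
  · rw [payoff_eq_top ρ k ht]; exact le_top

lemma tie_of_eq (σ ρ : Fin G.n → ℕ) (hE : ∀ m, G.payoff ρ m = G.payoff σ m) (m : Fin G.n) :
    G.cost (ρ m) + G.payoffO σ (G.dest (ρ m)) = G.payoff σ m := by
  have h1 := payoff_unfold ρ m
  have h2 : G.payoffO ρ (G.dest (ρ m)) = G.payoffO σ (G.dest (ρ m)) := by
    cases hd : G.dest (ρ m)
    · rfl
    · rw [payoffO_some, payoffO_some]; exact hE _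
  rw [← hE m, h1, h2]

lemma len_le_of_stepLe (σ ρ : Fin G.n → ℕ) (h : ∀ m, G.cand σ (ρ m) ≤ G.valn σ m)
    (hE : ∀ m, G.payoff ρ m = G.payoff σ m) (k : Fin G.n) : G.len ρ k ≤ G.len σ k := by
  have hsnd : ∀ m, 1 + G.lenO σ (G.dest (ρ m)) ≤ G.len σ m := by
    intro m
    have h' := h m; rw [cand_def, valn_def] at h'
    exact lex_snd_le h' (tie_of_eq σ ρ hE m)
  by_cases ht : G.Terminates ρ k
  · have key : ∀ T k, G.reach ρ k T = none → G.len ρ k ≤ G.len σ k := by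
      intro T
      induction T with
      | zero => intro k hT; exact absurd hT (by simp [reach_zero])
      | succ T IH =>
        intro k hT
        have h2 : G.lenO ρ (G.dest (ρ k)) ≤ G.lenO σ (G.dest (ρ k)) := by
          cases hd : G.dest (ρ k) with
          | none => exact le_refl _
          | some d => exact IH d (by rwa [reach_succ_some ρ k T d hd] at hT)
        calc G.len ρ k = 1 + G.lenO ρ (G.dest (ρ k)) := len_unfold ρ k
          _ ≤ 1 + G.lenO σ (G.dest (ρ k)) := add_le_add_right h2 1
          _ ≤ G.len σ k := hsnd k
    obtain ⟨T, hT⟩ := ht; exact key T k hT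
  · rw [len_of_not_terminates ρ k ht]
    by_contra hc
    have hne : G.len σ k ≠ ⊤ := fun he => hc (he ▸ le_refl _)
    obtain ⟨g, hg0, hstep, hninj⟩ := exists_path ρ k ht
    have hmono2 : ∀ t, 1 + G.len σ (g (t+1)) ≤ G.len σ (g t) := by
      intro t; have h2 := hsnd (g t); rwa [hstep t, lenO_some] at h2
    have hfin : ∀ t, G.len σ (g t) ≠ ⊤ := by
      intro t
      induction t with
      | zero => rwa [hg0]
      | succ t IH =>
        exact fun he => IH (top_le_iff.mp ((he ▸ le_trans (self_le_add_left _ 1) (hmono2 t))))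
    have hdec : ∀ t, G.len σ (g (t+1)) < G.len σ (g t) :=
      fun t => enat_lt_of_one_add_le (hmono2 t) (hfin t)
    have hsa : StrictAnti (fun t => G.len σ (g t)) := strictAnti_nat_of_succ_lt hdec
    exact hninj (Function.Injective.of_comp (f := G.len σ) hsa.injective)

lemma len_le_of_stepGe (σ ρ : Fin G.n → ℕ) (h : ∀ m, G.valn σ m ≤ G.cand σ (ρ m))
    (hE : ∀ m, G.payoff ρ m = G.payoff σ m) (k : Fin G.n) : G.len σ k ≤ G.len ρ k := by
  have hsnd : ∀ m, G.len σ m ≤ 1 + G.lenO σ (G.dest (ρ m)) := by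
    intro m
    have h' := h m; rw [cand_def, valn_def] at h'
    exact lex_snd_le h' (tie_of_eq σ ρ hE m).symm
  by_cases ht : G.Terminates ρ k
  · have key : ∀ T k, G.reach ρ k T = none → G.len σ k ≤ G.len ρ k := by
      intro T
      induction T with
      | zero => intro k hT; exact absurd hT (by simp [reach_zero])
      | succ T IH =>
        intro k hT
        have h2 : G.lenO σ (G.dest (ρ k)) ≤ G.lenO ρ (G.dest (ρ k)) := by
          cases hd : G.dest (ρ k) with
          | none => exact le_refl _
          | some d => exact IH d (by rwa [reach_succ_some ρ k T d hd] at hT)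
        calc G.len σ k ≤ 1 + G.lenO σ (G.dest (ρ k)) := hsnd k
          _ ≤ 1 + G.lenO ρ (G.dest (ρ k)) := add_le_add_right h2 1
          _ = G.len ρ k := (len_unfold ρ k).symm
    obtain ⟨T, hT⟩ := ht; exact key T k hT
  · rw [len_of_not_terminates ρ k ht]; exact le_top

variable (G) in
/-- The two-level strict potential: payoff vector primary, length vector secondary. -/
def LtPhi (a b : Fin G.n → ℕ) : Prop :=
  (∀ k, G.payoff a k ≤ G.payoff b k) ∧
  ((∃ k, G.payoff a k ≠ G.payoff b k) ∨
    ((∀ k, G.payoff a k = G.payoff b k) ∧ (∀ k, G.len a k ≤ G.len b k) ∧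
      ∃ k, G.len a k ≠ G.len b k))

lemma ltPhi_irrefl' (a b : Fin G.n → ℕ) (hp : ∀ k, G.payoff a k = G.payoff b k)
    (hl : ∀ k, G.len a k = G.len b k) : ¬ G.LtPhi a b := by
  rintro ⟨_, ⟨k, hk⟩ | ⟨_, _, ⟨k, hk⟩⟩⟩
  · exact hk (hp k)
  · exact hk (hl k)

lemma ltPhi_trans {a b c : Fin G.n → ℕ} (h1 : G.LtPhi a b) (h2 : G.LtPhi b c) :
    G.LtPhi a c := by
  obtain ⟨hle1, hr1⟩ := h1
  obtain ⟨hle2, hr2⟩ := h2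
  refine ⟨fun k => le_trans (hle1 k) (hle2 k), ?_⟩
  by_cases hE : ∀ k, G.payoff a k = G.payoff c k
  · right
    have hEab : ∀ k, G.payoff a k = G.payoff b k :=
      fun k => le_antisymm (hle1 k) (le_trans (hle2 k) (le_of_eq (hE k).symm))
    have hEbc : ∀ k, G.payoff b k = G.payoff c k :=
      fun k => le_antisymm (hle2 k) (le_trans (le_of_eq (hE k).symm) (hle1 k))
    rcases hr1 with ⟨k, hk⟩ | ⟨_, hl1, ⟨k1, hk1⟩⟩
    · exact absurd (hEab k) hk
    · rcases hr2 with ⟨k, hk⟩ | ⟨_, hl2, _⟩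
      · exact absurd (hEbc k) hk
      · refine ⟨hE, fun k => le_trans (hl1 k) (hl2 k), ?_⟩
        by_contra hnone
        push_neg at hnone
        exact hk1 (le_antisymm (hl1 k1) (le_trans (hl2 k1) (le_of_eq (hnone k1).symm)))
  · left; push_neg at hE; exact hE

lemma ltPhi_of_stepLe (σ ρ : Fin G.n → ℕ) (h : ∀ m, G.cand σ (ρ m) ≤ G.valn σ m)
    (k₀ : Fin G.n) (hstrict : G.cand σ (ρ k₀) < G.valn σ k₀) : G.LtPhi ρ σ := by
  have hp := payoff_le_of_stepLe σ ρ h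
  refine ⟨hp, ?_⟩
  by_cases hE : ∀ m, G.payoff ρ m = G.payoff σ m
  · right
    have hl := len_le_of_stepLe σ ρ h hE
    refine ⟨hE, hl, ⟨k₀, ?_⟩⟩
    have h' := hstrict
    rw [cand_def, valn_def] at h'
    rcases lex_lt_cases h' with hf | ⟨hf, hs⟩
    · exfalso
      have hlt : G.payoff ρ k₀ < G.payoff σ k₀ := by
        rw [payoff_unfold ρ k₀]
        refine lt_of_le_of_lt (add_le_add_right ?_ _) hf
        cases hd : G.dest (ρ k₀)
        · exact le_refl _
        · rw [payoffO_some, payoffO_some]; exact (hE _).le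
      exact absurd (hE k₀) (ne_of_lt hlt)
    · have hlt : G.len ρ k₀ < G.len σ k₀ := by
        rw [len_unfold ρ k₀]
        refine lt_of_le_of_lt (add_le_add_right ?_ 1) hs
        cases hd : G.dest (ρ k₀)
        · exact le_refl _
        · rw [lenO_some, lenO_some]; exact hl _
      exact ne_of_lt hlt
  · left; push_neg at hE; exact hE

lemma ltPhi_of_stepGe (σ ρ : Fin G.n → ℕ) (h : ∀ m, G.valn σ m ≤ G.cand σ (ρ m))
    (k₀ : Fin G.n) (hstrict : G.valn σ k₀ < G.cand σ (ρ k₀)) : G.LtPhi σ ρ := by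
  have hp := payoff_le_of_stepGe σ ρ h
  refine ⟨hp, ?_⟩
  by_cases hE : ∀ m, G.payoff ρ m = G.payoff σ m
  · right
    have hl := len_le_of_stepGe σ ρ h hE
    refine ⟨fun m => (hE m).symm, hl, ⟨k₀, ?_⟩⟩
    have h' := hstrict
    rw [cand_def, valn_def] at h'
    rcases lex_lt_cases h' with hf | ⟨hf, hs⟩
    · exfalso
      have hlt : G.payoff σ k₀ < G.payoff ρ k₀ := by
        rw [payoff_unfold ρ k₀]
        refine lt_of_lt_of_le hf (add_le_add_right ?_ _)
        cases hd : G.dest (ρ k₀)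
        · exact le_refl _
        · rw [payoffO_some, payoffO_some]; exact (hE _).ge
      exact absurd (hE k₀).symm (ne_of_lt hlt)
    · have hlt : G.len σ k₀ < G.len ρ k₀ := by
        rw [len_unfold ρ k₀]
        refine lt_of_lt_of_le hs (add_le_add_right ?_ 1)
        cases hd : G.dest (ρ k₀)
        · exact le_refl _
        · rw [lenO_some, lenO_some]; exact hl _
      exact ne_of_lt hlt
  · left
    push_neg at hE
    obtain ⟨m, hm⟩ := hE
    exact ⟨m, fun hh => hm hh.symm⟩


lemma not_imp1_le (σ : Fin G.n → ℕ) (k : Fin G.n) (j : ℕ) (hj : j ∈ G.A k)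
    (h : ¬ G.Improving1 σ k j) : G.valn σ k ≤ G.cand σ j :=
  not_lt.mp (fun hlt => h ⟨hj, hlt⟩)

lemma not_imp2_le (σ : Fin G.n → ℕ) (k : Fin G.n) (j : ℕ) (hj : j ∈ G.A k)
    (h : ¬ G.Improving2 σ k j) : G.cand σ j ≤ G.valn σ k :=
  not_lt.mp (fun hlt => h ⟨hj, hlt⟩)

lemma ltPhi_inner (σ : Fin G.n → ℕ) (β : Fin G.n → Option ℕ) (hIS : G.ImprovingSet2 σ β) :
    G.LtPhi σ (G.switch σ β) := by
  obtain ⟨hA, ⟨k₀, j, hk₀, himp2⟩, hno1⟩ := hIS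
  apply ltPhi_of_stepGe σ (G.switch σ β) ?_ k₀ ?_
  · intro m
    cases hb : β m with
    | none =>
      simp only [switch, hb, Option.getD_none]
      exact le_of_eq (valn_unfold σ m)
    | some j' =>
      simp only [switch, hb, Option.getD_some]
      exact not_imp1_le σ m j' (hA m j' hb) (hno1 m j' hb)
  · simp only [switch, hk₀, Option.getD_some]
    exact himp2.2

lemma ltPhi_outer (τ : Fin G.n → ℕ) (β : Fin G.n → Option ℕ) (σ : Fin G.n → ℕ)
    (hpre : ∀ k j, G.owner k = 1 → ¬ G.Improving2 τ k j)
    (hsupp : ∀ k, β k ≠ none → G.owner k = 0) (hIS : G.ImprovingSet1 τ β)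
    (hvσ : G.Valid σ) (hagree : ∀ k, G.owner k = 0 → σ k = G.switch τ β k) :
    G.LtPhi σ τ := by
  obtain ⟨hA, ⟨k₀, j, hk₀, himp1⟩, hno2⟩ := hIS
  apply ltPhi_of_stepLe τ σ ?_ k₀ ?_
  · intro m
    by_cases ho : G.owner m = 0
    · rw [hagree m ho]
      cases hb : β m with
      | none =>
        simp only [switch, hb, Option.getD_none]
        exact le_of_eq (valn_unfold τ m).symm
      | some j' =>
        simp only [switch, hb, Option.getD_some]
        exact not_imp2_le τ m j' (hA m j' hb) (hno2 m j' hb)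
    · exact not_imp2_le τ m (σ m) (hvσ m) (hpre m (σ m) (owner_one ho))
  · have hown0 : G.owner k₀ = 0 := hsupp k₀ (by simp [hk₀])
    rw [hagree k₀ hown0]
    simp only [switch, hk₀, Option.getD_some]
    exact himp1.2


end PricedGame

/-- the strategy iteration algorithm never revisits a strategy profile
(so, the strategy space being finite, it terminates), and a profile with no improving
switches for either player is optimal for both players. -/
theorem strategy_iteration_terminates (G : PricedGame) :
    (∀ f : ℕ → (Fin G.n → ℕ), (∀ t, G.Valid (f t)) →
      (∀ t, G.AlgStep (f t) (f (t + 1))) → ∀ t t', t < t' → f t ≠ f t') ∧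
    (∀ σ, G.Valid σ →
      (∀ k j, G.owner k = 0 → ¬ G.Improving1 σ k j) →
      (∀ k j, G.owner k = 1 → ¬ G.Improving2 σ k j) →
      G.Optimal1 σ ∧ G.Optimal2 σ) := by
  constructor
  · -- Part 1: no infinite trajectory is possible at all.
    intro f hv hs
    exfalso
    set P : ℕ → Prop := fun t => ∀ k j, G.owner k = 1 → ¬ G.Improving2 (f t) k j with hP
    have hstep_inner : ∀ t, ¬ P t → ∃ β, (∀ k, β k ≠ none → G.owner k = 1) ∧
        G.ImprovingSet2 (f t) β ∧ f (t+1) = G.switch (f t) β := by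
      intro t hno
      rcases hs t with h | ⟨hpre, _⟩
      · exact h
      · exact absurd hpre hno
    have hstep_outer : ∀ t, P t → ∃ β, (∀ k, β k ≠ none → G.owner k = 0) ∧
        G.ImprovingSet1 (f t) β ∧ f (t+1) = G.switch (f t) β := by
      intro t hyes
      rcases hs t with ⟨β, hsupp, hIS, _⟩ | ⟨_, h⟩
      · exfalso
        obtain ⟨_, ⟨k, j, hk, himp⟩, _⟩ := hIS
        exact hyes k j (hsupp k (by simp [hk])) himp
      · exact h
    have hInc : ∀ t, ¬ P t → G.LtPhi (f t) (f (t+1)) := by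
      intro t h
      obtain ⟨β, _, hIS, he⟩ := hstep_inner t h
      rw [he]
      exact ltPhi_inner (f t) β hIS
    have hOutDec : ∀ s r, P s → s < r → (∀ q, s < q → q < r → ¬ P q) →
        G.LtPhi (f r) (f s) := by
      intro s r hOs hsr hno
      obtain ⟨β, hsupp, hIS, he⟩ := hstep_outer s hOs
      have hagree : ∀ r', s < r' → r' ≤ r → ∀ k, G.owner k = 0 →
          f r' k = G.switch (f s) β k := by
        intro r'
        induction r' with
        | zero => intro h1; exact absurd h1 (Nat.not_lt_zero s)
        | succ r' IH =>
          intro h1 h2 k hk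
          rcases Nat.lt_or_ge s r' with hlt | hge
          · obtain ⟨β2, hsupp2, _, he2⟩ := hstep_inner r' (hno r' hlt (by omega))
            rw [he2]
            have hb2 : β2 k = none := by
              by_contra hne
              have h3 := hsupp2 k hne
              rw [hk] at h3
              exact absurd h3 (by simp)
            simp only [switch, hb2, Option.getD_none]
            exact IH hlt (by omega) k hk
          · have hrs : r' = s := by omega
            subst hrs
            rw [he]
      exact ltPhi_outer (f s) β (f r) hOs hsupp hIS (hv r) (hagree r hsr (le_refl r))
    have hM2 : ∀ d r s, r - s = d → P s → s < r → G.LtPhi (f r) (f s) := by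
      intro d
      induction d using Nat.strong_induction_on with
      | _ d IH =>
        intro r s hd hOs hsr
        by_cases hq : ∃ q, s < q ∧ q < r ∧ P q
        · obtain ⟨q, hq1, hq2, hOq⟩ := hq
          exact ltPhi_trans (IH (r - q) (by omega) r q rfl hOq hq2)
            (IH (q - s) (by omega) q s rfl hOs hq1)
        · push_neg at hq
          exact hOutDec s r hOs hsr (fun q h1 h2 => hq q h1 h2)
    have hVfin : (Set.pi Set.univ (fun k => (G.A k : Set ℕ))).Finite :=
      Set.Finite.pi (fun k => (G.A k).finite_toSet)
    by_cases hInf : ∀ T, ∃ s, T ≤ s ∧ P s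
    · -- infinitely many outer steps: Player-1 parts must repeat, contradiction
      have hSinf : {s : ℕ | P s}.Infinite := by
        apply Set.infinite_of_not_bddAbove
        rintro ⟨B, hB⟩
        obtain ⟨s, hs1, hs2⟩ := hInf (B+1)
        have hsB : s ≤ B := hB hs2
        omega
      have hmaps : Set.MapsTo (fun s (k : Fin G.n) => if G.owner k = 0 then f s k else 0)
          {s : ℕ | P s} (Set.pi Set.univ (fun k => insert 0 (G.A k : Set ℕ))) := by
        intro s _ k _
        by_cases h : G.owner k = 0 <;> simp [h, hv s k]
      have hfin2 : (Set.pi Set.univ (fun k => insert 0 (G.A k : Set ℕ))).Finite :=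
        Set.Finite.pi (fun k => ((G.A k).finite_toSet.insert 0))
      obtain ⟨x, hx, y, hy, hxy, hπeq⟩ :=
        Set.Infinite.exists_ne_map_eq_of_mapsTo hSinf hmaps hfin2
      have hmain : ∀ x y, P x → P y → x < y →
          ((fun s (k : Fin G.n) => if G.owner k = 0 then f s k else 0) x =
           (fun s (k : Fin G.n) => if G.owner k = 0 then f s k else 0) y) → False := by
        intro x y hOx hOy hxy' hpe
        have hagree0 : ∀ k, G.owner k = 0 → f y k = f x k := by
          intro k hk
          have h1 := congrFun hpe k
          simpa [hk] using h1.symm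
        have hswle : ∀ (a b : ℕ), P a → (∀ k, G.owner k = 0 → f b k = f a k) →
            ∀ m, G.cand (f a) ((f b) m) ≤ G.valn (f a) m := by
          intro a b hOa hag m
          by_cases ho : G.owner m = 0
          · rw [hag m ho]
            exact le_of_eq (valn_unfold (f a) m).symm
          · exact not_imp2_le (f a) m ((f b) m) (hv b m) (hOa m ((f b) m) (owner_one ho))
        have hagree0' : ∀ k, G.owner k = 0 → f x k = f y k := fun k hk => (hagree0 k hk).symm
        have hpxy : ∀ k, G.payoff (f y) k = G.payoff (f x) k := by
          intro k
          exact le_antisymm (payoff_le_of_stepLe (f x) (f y) (hswle x y hOx hagree0) k)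
            (payoff_le_of_stepLe (f y) (f x) (hswle y x hOy hagree0') k)
        have hlxy : ∀ k, G.len (f y) k = G.len (f x) k := by
          intro k
          exact le_antisymm (len_le_of_stepLe (f x) (f y) (hswle x y hOx hagree0) hpxy k)
            (len_le_of_stepLe (f y) (f x) (hswle y x hOy hagree0') (fun m => (hpxy m).symm) k)
        exact ltPhi_irrefl' (f y) (f x) hpxy hlxy (hM2 (y - x) y x rfl hOx hxy')
      rcases Nat.lt_trichotomy x y with h|h|h
      · exact hmain x y hx hy h hπeq
      · exact hxy h
      · exact hmain y x hy hx h hπeq.symm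
    · -- finitely many outer steps: the tail is an infinite strictly increasing inner chain
      push_neg at hInf
      obtain ⟨T, hT⟩ := hInf
      have hTi : ∀ s, T ≤ s → ¬ P s := hT
      have hchain : ∀ m m', m < m' → G.LtPhi (f (T+m)) (f (T+m')) := by
        intro m m' hmm
        induction m' with
        | zero => omega
        | succ m' IH =>
          have hstep' : G.LtPhi (f (T+m')) (f (T+m'+1)) := hInc (T+m') (hTi (T+m') (by omega))
          have harr : T + (m'+1) = T + m' + 1 := by omega
          rcases Nat.lt_or_ge m m' with h|h
          · exact ltPhi_trans (IH h) (harr ▸ hstep')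
          · have hmeq : m = m' := by omega
            subst hmeq
            exact harr ▸ hstep'
      have hinj : Function.Injective (fun m => f (T+m)) := by
        intro a b hab
        simp only at hab
        rcases Nat.lt_trichotomy a b with h|h|h
        · exact absurd (hchain a b h) (ltPhi_irrefl' _ _ (fun k => by rw [hab])
            (fun k => by rw [hab]))
        · exact h
        · exact absurd (hchain b a h) (ltPhi_irrefl' _ _ (fun k => by rw [hab])
            (fun k => by rw [hab]))
      exact (Set.infinite_of_injective_forall_mem hinj
        (fun m => Set.mem_univ_pi.mpr (fun k => hv (T+m) k))) hVfin
  · -- Part 2: local optimality implies global optimality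
    intro σ hσ h1 h2
    have hcs : G.combine σ σ = σ := by
      funext k
      rw [combine]
      split <;> rfl
    have Key1 : ∀ σ₂', G.Valid σ₂' → ∀ k, G.payoff (G.combine σ σ₂') k ≤ G.payoff σ k := by
      intro σ₂' hσ₂' k
      apply payoff_le_of_stepLe σ (G.combine σ σ₂') ?_ k
      intro m
      by_cases ho : G.owner m = 0
      · simp only [combine, if_pos ho]
        exact le_of_eq (valn_unfold σ m).symm
      · simp only [combine, if_neg ho]
        exact not_imp2_le σ m (σ₂' m) (hσ₂' m) (h2 m (σ₂' m) (owner_one ho))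
    have Key2 : ∀ σ₁', G.Valid σ₁' → ∀ k, G.payoff σ k ≤ G.payoff (G.combine σ₁' σ) k := by
      intro σ₁' hσ₁' k
      apply payoff_le_of_stepGe σ (G.combine σ₁' σ) ?_ k
      intro m
      by_cases ho : G.owner m = 0
      · simp only [combine, if_pos ho]
        exact not_imp1_le σ m (σ₁' m) (hσ₁' m) (h1 m (σ₁' m) ho)
      · simp only [combine, if_neg ho]
        exact le_of_eq (valn_unfold σ m)
    constructor
    · refine ⟨hσ, fun k => ?_⟩
      have hsup : (⨆ σ₂' : {σ' : Fin G.n → ℕ // G.Valid σ'},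
          G.payoff (G.combine σ σ₂') k) = G.payoff σ k := by
        apply le_antisymm
        · exact iSup_le fun σ₂' => Key1 σ₂' σ₂'.2 k
        · have h3 := le_iSup (fun σ₂' : {σ' : Fin G.n → ℕ // G.Valid σ'} =>
            G.payoff (G.combine σ σ₂') k) ⟨σ, hσ⟩
          rwa [hcs] at h3
      rw [hsup, upperVal]
      apply le_antisymm
      · apply le_iInf
        rintro ⟨σ₁', hσ₁'⟩
        exact le_trans (Key2 σ₁' hσ₁' k) (le_iSup_of_le ⟨σ, hσ⟩ (le_refl _))
      · exact iInf_le_of_le ⟨σ, hσ⟩ (iSup_le fun σ₂' => Key1 σ₂' σ₂'.2 k)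
    · refine ⟨hσ, fun k => ?_⟩
      have hinf : (⨅ σ₁' : {σ' : Fin G.n → ℕ // G.Valid σ'},
          G.payoff (G.combine σ₁' σ) k) = G.payoff σ k := by
        apply le_antisymm
        · have h3 := iInf_le (fun σ₁' : {σ' : Fin G.n → ℕ // G.Valid σ'} =>
            G.payoff (G.combine σ₁' σ) k) ⟨σ, hσ⟩
          rwa [hcs] at h3
        · exact le_iInf fun σ₁' => Key2 σ₁' σ₁'.2 k
      rw [hinf, lowerVal]
      apply le_antisymm
      · exact le_iSup_of_le ⟨σ, hσ⟩ (le_iInf fun σ₁' => Key2 σ₁' σ₁'.2 k)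
      · apply iSup_le
        rintro ⟨σ₂', hσ₂'⟩
        exact le_trans (iInf_le _ ⟨σ, hσ⟩) (Key1 σ₂' hσ₂' k)


end PTGpaper
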